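/- Let a, b > 0 satisfy s·a ≤ b ≤ t·a for some 0 < s ≤ t, and let v ∈ [0,1]. Set ξ = max{((1-v)+v·s)/s^v, ((1-v)+v·t)/t^v}. Then (1/ξ)·((1-v)·a + v·b) ≤ a^{1-v}·b^v. -/

import Mathlib

theorem reverse_AM_GM_sandwich (a b s t v : ℝ)
    (ha : 0 < a) (hb : 0 < b) (hs : 0 < s) (hst : s ≤ t)
    (hsa : s * a ≤ b) (hbt : b ≤ t * a) (hv0 : 0 ≤ v) (hv1 : v ≤ 1) :
    (1 / max (((1 - v) + v * s) / s ^ v) (((1 - v) + v * t) / t ^ v)) * ((1 - v) * a + v * b)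
      ≤ a ^ (1 - v) * b ^ v := by
  have ht : 0 < t := lt_of_lt_of_le hs hst
  have hsv : (0:ℝ) < s ^ v := Real.rpow_pos_of_pos hs v
  have htv : (0:ℝ) < t ^ v := Real.rpow_pos_of_pos ht v
  set ξ := max (((1 - v) + v * s) / s ^ v) (((1 - v) + v * t) / t ^ v) with hξdef
  have hps : 0 < (1 - v) + v * s := by
    rcases lt_or_ge v 1 with h | h
    · nlinarith
    · have : v = 1 := le_antisymm hv1 h
      rw [this]; linarith
  have hξpos : 0 < ξ := lt_of_lt_of_le (div_pos hps hsv) (le_max_left _ _)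
  have hξs : (1 - v) + v * s ≤ ξ * s ^ v := by
    have := le_max_left (((1 - v) + v * s) / s ^ v) (((1 - v) + v * t) / t ^ v)
    rw [div_le_iff₀ hsv] at this; linarith
  have hξt : (1 - v) + v * t ≤ ξ * t ^ v := by
    have := le_max_right (((1 - v) + v * s) / s ^ v) (((1 - v) + v * t) / t ^ v)
    rw [div_le_iff₀ htv] at this; linarith
  set x := b / a with hxdef
  have hx0 : 0 < x := div_pos hb ha
  have hxs : s ≤ x := (le_div_iff₀ ha).2 (by linarith)
  have hxt : x ≤ t := (div_le_iff₀ ha).2 (by linarith)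
  -- key inequality
  have key : (1 - v) + v * x ≤ ξ * x ^ v := by
    rcases eq_or_lt_of_le hst with rfl | hlt
    · have : x = s := le_antisymm hxt hxs
      rw [this]; exact hξs
    · set lam := (t - x) / (t - s) with hlam
      set mu := (x - s) / (t - s) with hmu
      have hts : 0 < t - s := by linarith
      have hlam0 : 0 ≤ lam := div_nonneg (by linarith) hts.le
      have hmu0 : 0 ≤ mu := div_nonneg (by linarith) hts.le
      have hne : t - s ≠ 0 := hts.ne'
      have hsum : lam + mu = 1 := by rw [hlam, hmu]; field_simp; ring
      have hcomb : lam * s + mu * t = x := by rw [hlam, hmu]; field_simp; ring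
      have hconc := (Real.concaveOn_rpow hv0 hv1).2 (Set.mem_Ici.2 hs.le)
        (Set.mem_Ici.2 ht.le) hlam0 hmu0 hsum
      simp only [smul_eq_mul] at hconc
      rw [hcomb] at hconc
      have h1 : lam * ((1 - v) + v * s) + mu * ((1 - v) + v * t)
          ≤ lam * (ξ * s ^ v) + mu * (ξ * t ^ v) := by
        have := mul_le_mul_of_nonneg_left hξs hlam0
        have := mul_le_mul_of_nonneg_left hξt hmu0
        linarith
      have h2 : lam * ((1 - v) + v * s) + mu * ((1 - v) + v * t) = (1 - v) + v * x := by
        rw [← hcomb]; nlinarith [hsum]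
      have h3 : lam * (ξ * s ^ v) + mu * (ξ * t ^ v) = ξ * (lam * s ^ v + mu * t ^ v) := by ring
      calc (1 - v) + v * x = lam * ((1 - v) + v * s) + mu * ((1 - v) + v * t) := h2.symm
        _ ≤ ξ * (lam * s ^ v + mu * t ^ v) := by linarith
        _ ≤ ξ * x ^ v := by
            exact mul_le_mul_of_nonneg_left hconc hξpos.le
  -- convert goal
  have hab : a ^ (1 - v) * b ^ v = a * x ^ v := by
    have hb' : b = a * x := by rw [hxdef, mul_div_cancel₀ b ha.ne']
    rw [hb', Real.mul_rpow ha.le hx0.le, ← mul_assoc, ← Real.rpow_add ha]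
    ring_nf
    rw [Real.rpow_one]; ring
  rw [hab, one_div, ← div_eq_inv_mul, div_le_iff₀ hξpos]
  have : (1 - v) * a + v * b = a * ((1 - v) + v * x) := by
    have hb' : b = a * x := by rw [hxdef, mul_div_cancel₀ b ha.ne']
    rw [hb']; ring
  rw [this]
  calc a * ((1 - v) + v * x) ≤ a * (ξ * x ^ v) :=
        mul_le_mul_of_nonneg_left key ha.le
    _ = a * x ^ v * ξ := by ring
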